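/- Every nonzero element a of D ⊗[k] LaurentSeries k can be written as a = (1 ⊗ tⁿ) * Φ(u) for some n : ℤ and some unit u of D ⊗[k] PowerSeries k. In particular D ⊗[k] k((t)) is a division ring, and every unit of D ⊗[k] k((t)) is the product of a unit of k((t)) (embedded as 1 ⊗ −) and the image under Φ of a unit of D ⊗[k] k[[t]]. -/

import Mathlib

open scoped TensorProduct

set_option synthInstance.maxHeartbeats 1000000
set_option maxHeartbeats 2000000

-- Remove a non-defeq duplicate algebra instance on Hahn/Laurent series so that the
-- `k`-algebra structure on `LaurentSeries k` is the canonical `HahnSeries.instAlgebra`.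
attribute [-instance] HahnSeries.powerSeriesAlgebra

noncomputable section StmtAux17
open HahnSeries

variable {k D : Type*} [Field k] [DivisionRing D] [Algebra k D]

def cAlg17 : D →ₐ[k] HahnSeries ℤ D :=
  { (HahnSeries.C : D →+* HahnSeries ℤ D) with
    commutes' := fun _ => (HahnSeries.algebraMap_apply).symm }

lemma cAlg17_apply (d : D) : (cAlg17 (k := k) d : HahnSeries ℤ D) = HahnSeries.C d := rfl

def mapAlg17 : LaurentSeries k →ₐ[k] HahnSeries ℤ D where
  toFun f := f.map (algebraMap k D)
  map_one' := HahnSeries.map_one (algebraMap k D).toMonoidWithZeroHom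
  map_mul' x y := HahnSeries.map_mul (algebraMap k D).toNonUnitalRingHom
  map_zero' := by ext z; simp
  map_add' x y := HahnSeries.map_add (algebraMap k D).toAddMonoidHom
  commutes' c := by
    ext z
    simp [HahnSeries.algebraMap_apply, HahnSeries.C_apply, HahnSeries.coeff_single,
      apply_ite (algebraMap k D)]

lemma mapAlg17_apply (f : LaurentSeries k) :
    (mapAlg17 f : HahnSeries ℤ D) = f.map (algebraMap k D) := rfl

def iotaL17 : D ⊗[k] LaurentSeries k →ₐ[k] HahnSeries ℤ D :=
  Algebra.TensorProduct.lift cAlg17 mapAlg17 (fun d f => by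
    rw [Commute, SemiconjBy]
    ext z
    rw [cAlg17_apply, mapAlg17_apply, HahnSeries.C_apply, HahnSeries.coeff_single_zero_mul,
      HahnSeries.coeff_mul_single_zero, HahnSeries.map_coeff]
    exact (Algebra.commutes _ _).symm)

lemma iotaL17_tmul (d : D) (f : LaurentSeries k) :
    iotaL17 (k := k) (D := D) (d ⊗ₜ[k] f) = HahnSeries.C d * f.map (algebraMap k D) :=
  Algebra.TensorProduct.lift_tmul _ _ _ _ _

lemma iotaL17_tmul_coeff (d : D) (f : LaurentSeries k) (z : ℤ) :
    (iotaL17 (k := k) (D := D) (d ⊗ₜ[k] f)).coeff z = d * algebraMap k D (f.coeff z) := by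
  rw [iotaL17_tmul, HahnSeries.C_apply, HahnSeries.coeff_single_zero_mul, HahnSeries.map_coeff]

lemma hahn_sum_coeff17 {R α : Type*} [AddCommMonoid R] (s : Finset α)
    (f : α → HahnSeries ℤ R) (z : ℤ) :
    (∑ i ∈ s, f i).coeff z = ∑ i ∈ s, (f i).coeff z :=
  map_sum (HahnSeries.coeff.addMonoidHom z) f s

def coordSeries17 {ι : Type*} (b : Module.Basis ι k D) (i : ι) (g : HahnSeries ℤ D) :
    LaurentSeries k where
  coeff z := b.repr (g.coeff z) i
  isPWO_support' := g.isPWO_support.mono fun z hz => by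
    simp only [Function.mem_support, ne_eq, HahnSeries.mem_support] at hz ⊢
    exact fun h0 => hz (by simp [h0])

@[simp] lemma coordSeries17_coeff {ι : Type*} (b : Module.Basis ι k D) (i : ι) (g : HahnSeries ℤ D)
    (z : ℤ) : (coordSeries17 b i g).coeff z = b.repr (g.coeff z) i := rfl

lemma coordSeries17_zero {ι : Type*} (b : Module.Basis ι k D) (i : ι) :
    coordSeries17 b i (0 : HahnSeries ℤ D) = 0 := by
  ext z; simp

lemma coordSeries17_add {ι : Type*} (b : Module.Basis ι k D) (i : ι) (g g' : HahnSeries ℤ D) :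
    coordSeries17 b i (g + g') = coordSeries17 b i g + coordSeries17 b i g' := by
  ext z; simp [HahnSeries.coeff_add]

def bigF17 {ι : Type*} [Fintype ι] (b : Module.Basis ι k D) (g : HahnSeries ℤ D) :
    D ⊗[k] LaurentSeries k :=
  ∑ i, b i ⊗ₜ[k] coordSeries17 b i g

lemma bigF17_zero {ι : Type*} [Fintype ι] (b : Module.Basis ι k D) :
    bigF17 b (0 : HahnSeries ℤ D) = 0 := by
  simp [bigF17, coordSeries17_zero]

lemma bigF17_add {ι : Type*} [Fintype ι] (b : Module.Basis ι k D) (g g' : HahnSeries ℤ D) :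
    bigF17 b (g + g') = bigF17 b g + bigF17 b g' := by
  simp [bigF17, coordSeries17_add, TensorProduct.tmul_add, Finset.sum_add_distrib]

lemma iotaL17_bigF17 {ι : Type*} [Fintype ι] (b : Module.Basis ι k D) (g : HahnSeries ℤ D) :
    iotaL17 (k := k) (D := D) (bigF17 b g) = g := by
  ext z
  rw [bigF17, map_sum, hahn_sum_coeff17]
  have h : ∀ i : ι, (iotaL17 (k := k) (D := D) (b i ⊗ₜ[k] coordSeries17 b i g)).coeff z
      = b.repr (g.coeff z) i • b i := by
    intro i
    rw [iotaL17_tmul_coeff, coordSeries17_coeff, Algebra.smul_def]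
    exact (Algebra.commutes _ _).symm
  simp_rw [h]
  exact b.sum_repr (g.coeff z)

lemma bigF17_iotaL17 {ι : Type*} [Fintype ι] (b : Module.Basis ι k D) (x : D ⊗[k] LaurentSeries k) :
    bigF17 b (iotaL17 (k := k) (D := D) x) = x := by
  induction x with
  | zero => rw [map_zero, bigF17_zero]
  | tmul d f =>
    have hc : ∀ i, coordSeries17 b i (iotaL17 (k := k) (D := D) (d ⊗ₜ[k] f)) = b.repr d i • f := by
      intro i
      ext z
      rw [coordSeries17_coeff, iotaL17_tmul_coeff, ← Algebra.commutes (f.coeff z) d,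
        ← Algebra.smul_def, map_smul, Finsupp.smul_apply, smul_eq_mul, HahnSeries.coeff_smul,
        smul_eq_mul, mul_comm]
    rw [bigF17]
    simp_rw [hc, TensorProduct.tmul_smul, TensorProduct.smul_tmul', ← TensorProduct.sum_tmul,
      b.sum_repr d]
  | add x y hx hy => rw [map_add, bigF17_add, hx, hy]

lemma ofPowerSeries17_coeff_neg {R : Type*} [Semiring R] (p : PowerSeries R) {z : ℤ}
    (hz : z < 0) : (HahnSeries.ofPowerSeries ℤ R p).coeff z = 0 := by
  rw [HahnSeries.ofPowerSeries_apply, HahnSeries.embDomain_of_notMem_range]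
  simp only [Set.mem_range, not_exists]
  intro m hm
  simp only [Nat.castOrderEmbedding_apply] at hm
  omega

lemma exists_ofPowerSeries17 {R : Type*} [Semiring R] (f : HahnSeries ℤ R)
    (hf : ∀ z : ℤ, z < 0 → f.coeff z = 0) :
    ∃ p : PowerSeries R, HahnSeries.ofPowerSeries ℤ R p = f := by
  refine ⟨PowerSeries.mk fun m => f.coeff (m : ℤ), ?_⟩
  ext z
  rcases le_or_gt 0 z with hz | hz
  · lift z to ℕ using hz with m
    rw [HahnSeries.ofPowerSeries_apply_coeff, PowerSeries.coeff_mk]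
  · rw [ofPowerSeries17_coeff_neg _ hz, hf z hz]

lemma ofPowerSeriesAlg17_eq (p : PowerSeries k) :
    HahnSeries.ofPowerSeriesAlg ℤ (R := k) (A := k) p = HahnSeries.ofPowerSeries ℤ k p := rfl

lemma Phi017_injective : Function.Injective
    (Algebra.TensorProduct.map (AlgHom.id k D) (HahnSeries.ofPowerSeriesAlg ℤ (R := k) (A := k)) :
      D ⊗[k] PowerSeries k →ₐ[k] D ⊗[k] LaurentSeries k) := by
  have h2 : Function.Injective
      ((HahnSeries.ofPowerSeriesAlg ℤ (R := k) (A := k)).toLinearMap) :=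
    HahnSeries.ofPowerSeries_injective
  have h3 := Module.Flat.lTensor_preserves_injective_linearMap (M := D)
    (HahnSeries.ofPowerSeriesAlg ℤ (R := k) (A := k)).toLinearMap h2
  have heq : ∀ x : D ⊗[k] PowerSeries k,
      (LinearMap.lTensor D (HahnSeries.ofPowerSeriesAlg ℤ (R := k) (A := k)).toLinearMap) x =
      Algebra.TensorProduct.map (AlgHom.id k D) (HahnSeries.ofPowerSeriesAlg ℤ (R := k) (A := k)) x := by
    intro x
    induction x with
    | zero => simp
    | tmul d p => simp
    | add a c ha hc => rw [map_add, map_add, ha, hc]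
  intro x y hxy
  exact h3 (by rw [heq, heq, hxy])

end StmtAux17

/-- Let `D` be a division ring that is a finite-dimensional algebra over a field `k`, and
let `Φ : D ⊗[k] k⟦t⟧ →ₐ[k] D ⊗[k] k⸨t⸩` be induced by the canonical embedding
`k⟦t⟧ → k⸨t⸩`. Every nonzero `a : D ⊗[k] k⸨t⸩` can be written as
`a = (1 ⊗ tⁿ) * Φ u` with `n : ℤ` and `u` a unit of `D ⊗[k] k⟦t⟧`. In particular
`D ⊗[k] k⸨t⸩` is a division ring, and every unit of `D ⊗[k] k⸨t⸩` is the product of a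
unit of `k⸨t⸩` (embedded as `1 ⊗ −`) and the image under `Φ` of a unit of
`D ⊗[k] k⟦t⟧`. -/
theorem stmt17 {k D : Type*} [Field k] [DivisionRing D] [Algebra k D]
    [FiniteDimensional k D]
    (Φ : D ⊗[k] PowerSeries k →ₐ[k] D ⊗[k] LaurentSeries k)
    (hΦ : Φ = Algebra.TensorProduct.map (AlgHom.id k D) (HahnSeries.ofPowerSeriesAlg ℤ k)) :
    (∀ a : D ⊗[k] LaurentSeries k, a ≠ 0 →
      ∃ (n : ℤ) (u : (D ⊗[k] PowerSeries k)ˣ),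
        a = ((1 : D) ⊗ₜ[k] (HahnSeries.single n 1 : LaurentSeries k)) * Φ u) ∧
    (∀ a : D ⊗[k] LaurentSeries k, a ≠ 0 → IsUnit a) ∧
    (∀ w : (D ⊗[k] LaurentSeries k)ˣ,
      ∃ (c : (LaurentSeries k)ˣ) (u : (D ⊗[k] PowerSeries k)ˣ),
        (w : D ⊗[k] LaurentSeries k) = ((1 : D) ⊗ₜ[k] (c : LaurentSeries k)) * Φ u) := by
  classical
  subst hΦ
  set Φ := Algebra.TensorProduct.map (AlgHom.id k D) (HahnSeries.ofPowerSeriesAlg ℤ (R := k) (A := k)) with hΦdef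
  set b := Module.finBasis k D with hb
  have hFι : ∀ x : D ⊗[k] LaurentSeries k, bigF17 b (iotaL17 (k := k) (D := D) x) = x := bigF17_iotaL17 b
  have hιF : ∀ g : HahnSeries ℤ D, iotaL17 (k := k) (D := D) (bigF17 b g) = g := iotaL17_bigF17 b
  have hinj : Function.Injective (iotaL17 : D ⊗[k] LaurentSeries k →ₐ[k] HahnSeries ℤ D) :=
    fun x y h => by rw [← hFι x, h, hFι y]
  have hΦinj : Function.Injective Φ := Phi017_injective
  -- range lemma
  have hrange : ∀ g : HahnSeries ℤ D, (∀ z : ℤ, z < 0 → g.coeff z = 0) →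
      ∃ x : D ⊗[k] PowerSeries k, Φ x = bigF17 b g := by
    intro g hg
    choose p hp using fun i => exists_ofPowerSeries17 (coordSeries17 b i g)
      (fun z hz => by rw [coordSeries17_coeff, hg z hz]; simp)
    refine ⟨∑ i, b i ⊗ₜ[k] p i, ?_⟩
    rw [map_sum, bigF17]
    refine Finset.sum_congr rfl fun i _ => ?_
    rw [Algebra.TensorProduct.map_tmul, AlgHom.coe_id, id_eq, ofPowerSeriesAlg17_eq, hp i]
  -- unit lemma
  have hunit : ∀ g : HahnSeries ℤ D, (∀ z : ℤ, z < 0 → g.coeff z = 0) → g.coeff 0 ≠ 0 →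
      ∃ u : (D ⊗[k] PowerSeries k)ˣ, Φ (u : D ⊗[k] PowerSeries k) = bigF17 b g := by
    intro g hg h0
    obtain ⟨p, hp⟩ := exists_ofPowerSeries17 g hg
    have hpc : PowerSeries.constantCoeff (R := D) p = g.coeff 0 := by
      have := HahnSeries.ofPowerSeries_apply_coeff (Γ := ℤ) p 0
      rw [hp] at this
      simpa using this.symm
    have hpu : IsUnit p := PowerSeries.isUnit_iff_constantCoeff.mpr
      (hpc ▸ isUnit_iff_ne_zero.mpr h0)
    obtain ⟨v, rfl⟩ := hpu
    set g' : HahnSeries ℤ D := HahnSeries.ofPowerSeries ℤ D ((v⁻¹ : (PowerSeries D)ˣ) : PowerSeries D) with hg'def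
    have hg' : ∀ z : ℤ, z < 0 → g'.coeff z = 0 := fun z hz => ofPowerSeries17_coeff_neg _ hz
    obtain ⟨x, hx⟩ := hrange g hg
    obtain ⟨x', hx'⟩ := hrange g' hg'
    have hgg' : g * g' = 1 := by
      rw [← hp, hg'def, ← map_mul, Units.mul_inv, map_one]
    have hg'g : g' * g = 1 := by
      rw [← hp, hg'def, ← map_mul, Units.inv_mul, map_one]
    have hxx' : x * x' = 1 := by
      apply hΦinj
      apply hinj
      rw [map_mul, map_mul, hx, hx', map_one, map_one, hιF, hιF, hgg']
    have hx'x : x' * x = 1 := by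
      apply hΦinj
      apply hinj
      rw [map_mul, map_mul, hx, hx', map_one, map_one, hιF, hιF, hg'g]
    exact ⟨⟨x, x', hxx', hx'x⟩, hx⟩
  -- main decomposition
  have part1 : ∀ a : D ⊗[k] LaurentSeries k, a ≠ 0 →
      ∃ (n : ℤ) (u : (D ⊗[k] PowerSeries k)ˣ),
        a = ((1 : D) ⊗ₜ[k] (HahnSeries.single n 1 : LaurentSeries k)) * Φ u := by
    intro a ha
    set g : HahnSeries ℤ D := iotaL17 (k := k) (D := D) a with hgdef
    have hg0 : g ≠ 0 := by
      intro h
      apply ha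
      rw [← hFι a, ← hgdef, h, bigF17_zero]
    set n : ℤ := g.order with hndef
    set h : HahnSeries ℤ D := HahnSeries.single (-n) 1 * g with hhdef
    have h0 : h.coeff 0 ≠ 0 := by
      have hmc := HahnSeries.coeff_mul_order_add_order (HahnSeries.single (-n) (1 : D)) g
      rw [HahnSeries.order_single one_ne_zero, HahnSeries.leadingCoeff_of_single, ← hndef,
        neg_add_cancel, one_mul] at hmc
      rw [hhdef, hmc]
      exact HahnSeries.leadingCoeff_ne_zero.mpr hg0
    have hneg : ∀ z : ℤ, z < 0 → h.coeff z = 0 := by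
      intro z hz
      have hz' : z = (z + n) + (-n) := by ring
      rw [hhdef, hz', HahnSeries.coeff_single_mul_add,
        HahnSeries.coeff_eq_zero_of_lt_order (by omega), mul_zero]
    obtain ⟨u, hu⟩ := hunit h hneg h0
    refine ⟨n, u, hinj ?_⟩
    rw [map_mul, hu, hιF]
    have h1 : iotaL17 (k := k) (D := D) ((1 : D) ⊗ₜ[k] (HahnSeries.single n 1 : LaurentSeries k))
        = HahnSeries.single n (1 : D) := by
      rw [iotaL17_tmul, map_one]
      ext z
      rw [one_mul, HahnSeries.map_coeff, HahnSeries.coeff_single, HahnSeries.coeff_single,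
        apply_ite (algebraMap k D), map_one, map_zero]
    rw [h1, hhdef, ← mul_assoc, HahnSeries.single_mul_single, add_neg_cancel, one_mul,
      HahnSeries.single_zero_one, one_mul, hgdef]
  -- units of the form 1 ⊗ tⁿ
  have htn : ∀ n : ℤ, ((1 : D) ⊗ₜ[k] (HahnSeries.single n 1 : LaurentSeries k)) *
      ((1 : D) ⊗ₜ[k] (HahnSeries.single (-n) 1 : LaurentSeries k)) = 1 := by
    intro n
    have hIR : ∀ f : LaurentSeries k, (1 : D) ⊗ₜ[k] f =
        (Algebra.TensorProduct.includeRight : LaurentSeries k →ₐ[k] D ⊗[k] LaurentSeries k) f :=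
      fun f => rfl
    rw [hIR, hIR, ← map_mul, HahnSeries.single_mul_single, add_neg_cancel, one_mul,
      HahnSeries.single_zero_one, map_one]
  refine ⟨part1, ?_, ?_⟩
  · intro a ha
    obtain ⟨n, u, hau⟩ := part1 a ha
    rw [hau]
    exact IsUnit.mul
      ⟨⟨(1 : D) ⊗ₜ[k] (HahnSeries.single n 1 : LaurentSeries k),
        (1 : D) ⊗ₜ[k] (HahnSeries.single (-n) 1 : LaurentSeries k),
        htn n, by simpa using htn (-n)⟩, rfl⟩ (u.isUnit.map Φ)
  · intro w
    have hnt : Nontrivial (D ⊗[k] LaurentSeries k) := by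
      refine ⟨⟨1, 0, fun h01 => ?_⟩⟩
      have := congrArg (iotaL17 : D ⊗[k] LaurentSeries k →ₐ[k] HahnSeries ℤ D) h01
      rw [map_one, map_zero] at this
      exact one_ne_zero this
    obtain ⟨n, u, hw⟩ := part1 (w : D ⊗[k] LaurentSeries k) (Units.ne_zero w)
    refine ⟨⟨HahnSeries.single n 1, HahnSeries.single (-n) 1, ?_, ?_⟩, u, hw⟩
    · rw [HahnSeries.single_mul_single, add_neg_cancel, one_mul, HahnSeries.single_zero_one]
    · rw [HahnSeries.single_mul_single, neg_add_cancel, one_mul, HahnSeries.single_zero_one]
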